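/- The 2CNF formula α = {(a ∨ b), (a ∨ ¬b), (¬a ∨ b), (¬a ∨ ¬b)} has a read-once resolution refutation but has no Var-ROR refutation; hence the class of 2CNF formulas with a Var-ROR refutation is a proper subset of the class of 2CNF formulas with a read-once resolution refutation. -/

import Mathlib

/-! Basic definitions: literals, clauses, CNF formulas. -/

/-- A literal is a variable together with a polarity. -/
abbrev Lit (V : Type) : Type := V × Bool

/-- Negation of a literal. -/
def Lit.neg {V : Type} (l : Lit V) : Lit V := (l.1, !l.2)

/-- A clause is a finite set of literals (a disjunction). -/
abbrev Clause (V : Type) : Type := Finset (Lit V)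

/-- A CNF formula is a finite set of clauses (a conjunction). -/
abbrev CNF (V : Type) : Type := Finset (Clause V)

section BasicDefs

variable {V : Type} [DecidableEq V]

/-- A literal holds under a Boolean assignment. -/
def Lit.holds (a : V → Bool) (l : Lit V) : Prop := a l.1 = l.2

/-- A clause holds under an assignment if some literal in it holds. -/
def Clause.holds (a : V → Bool) (C : Clause V) : Prop := ∃ l ∈ C, Lit.holds a l

/-- A CNF formula is satisfiable. -/
def CNF.sat (Φ : CNF V) : Prop := ∃ a : V → Bool, ∀ C ∈ Φ, Clause.holds a C

/-- A CNF formula is unsatisfiable. -/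
def CNF.unsat (Φ : CNF V) : Prop := ¬ CNF.sat Φ

/-- A CNF formula is minimal unsatisfiable: it is unsatisfiable and every
proper subformula is satisfiable. -/
def CNF.minUnsat (Φ : CNF V) : Prop :=
  CNF.unsat Φ ∧ ∀ Ψ : CNF V, Ψ ⊂ Φ → CNF.sat Ψ

/-- The set of variables occurring in a formula. -/
def CNF.vars (Φ : CNF V) : Finset V := Φ.biUnion (fun C => C.image Prod.fst)

/-- The deficiency of a formula: number of clauses minus number of variables. -/
def CNF.deficiency (Φ : CNF V) : ℤ := (Φ.card : ℤ) - ((CNF.vars Φ).card : ℤ)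

/-- MU(1): minimal unsatisfiable with deficiency 1. -/
def CNF.MU1 (Φ : CNF V) : Prop := CNF.minUnsat Φ ∧ CNF.deficiency Φ = 1

/-- A 2CNF formula: every clause has at most 2 literals. -/
def CNF.is2CNF (Φ : CNF V) : Prop := ∀ C ∈ Φ, C.card ≤ 2

/-- `R` is the resolvent of `C1` and `C2` upon the matching variable `x`. -/
def IsResolvent (C1 C2 R : Clause V) (x : V) : Prop :=
  (x, true) ∈ C1 ∧ (x, false) ∈ C2 ∧
    R = (C1.erase (x, true)) ∪ (C2.erase (x, false))

/-- One step of read-once resolution on a multiset of clauses: the two parent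
clauses are removed from the current multiset and the resolvent is added. -/
def RORStep (S T : Multiset (Clause V)) : Prop :=
  ∃ (C1 C2 R : Clause V) (x : V),
    C1 ∈ S ∧ C2 ∈ S.erase C1 ∧ IsResolvent C1 C2 R x ∧
    T = R ::ₘ ((S.erase C1).erase C2)

/-- Read-once derivability of the clause `π` from the multiset of clauses `S`. -/
def RORDeriv (S : Multiset (Clause V)) (π : Clause V) : Prop :=
  ∃ T : Multiset (Clause V), Relation.ReflTransGen RORStep S T ∧ π ∈ T

/-- The formula `Φ` has a read-once resolution refutation. -/
def CNF.hasROR (Φ : CNF V) : Prop := RORDeriv (Φ.val) (∅ : Clause V)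

end BasicDefs

/-- A resolution step: two parent clauses, a matching variable and a resolvent. -/
structure RStep (V : Type) where
  c1 : Clause V
  c2 : Clause V
  mv : V
  res : Clause V

section MoreDefs

variable {V : Type} [DecidableEq V]

/-- Validity of a resolution step. -/
def RStep.valid (s : RStep V) : Prop := IsResolvent s.c1 s.c2 s.res s.mv

/-- A list of resolution steps is a resolution derivation from `Φ`: each step is a
valid resolution step whose parents are clauses of `Φ` or resolvents of earlier steps. -/
def IsResDeriv (Φ : CNF V) (L : List (RStep V)) : Prop :=
  ∀ (i : ℕ) (h : i < L.length),
    RStep.valid (L.get ⟨i, h⟩) ∧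
    ((L.get ⟨i, h⟩).c1 ∈ Φ ∨
      ∃ j, ∃ _ : j < i, (L.get ⟨j, by omega⟩).res = (L.get ⟨i, h⟩).c1) ∧
    ((L.get ⟨i, h⟩).c2 ∈ Φ ∨
      ∃ j, ∃ _ : j < i, (L.get ⟨j, by omega⟩).res = (L.get ⟨i, h⟩).c2)

/-- `Φ` has a Var-ROR refutation: a resolution refutation in which every variable
is used at most once as a matching variable. -/
def CNF.hasVarROR (Φ : CNF V) : Prop :=
  ∃ L : List (RStep V), IsResDeriv Φ L ∧ (L.map RStep.mv).Nodup ∧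
    ∃ s ∈ L, s.res = (∅ : Clause V)

/-- `(Fx, Fnx)` is a splitting of `Φ` over the variable `x`: `Fx` consists of all clauses
of `Φ` containing the literal `x` with that literal removed, together with some clauses of
`Φ` not containing `x` nor `¬x` (and symmetrically for `Fnx` with `¬x`), and both `Fx` and
`Fnx` are minimal unsatisfiable. -/
def IsSplitting (Φ : CNF V) (x : V) (Fx Fnx : CNF V) : Prop :=
  ∃ S1 S2 : CNF V,
    S1 ⊆ Φ ∧ S2 ⊆ Φ ∧
    (∀ C ∈ S1, (x, true) ∉ C ∧ (x, false) ∉ C) ∧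
    (∀ C ∈ S2, (x, true) ∉ C ∧ (x, false) ∉ C) ∧
    Fx = ((Φ.filter (fun C => (x, true) ∈ C)).image (fun C => C.erase (x, true))) ∪ S1 ∧
    Fnx = ((Φ.filter (fun C => (x, false) ∈ C)).image (fun C => C.erase (x, false))) ∪ S2 ∧
    CNF.minUnsat Fx ∧ CNF.minUnsat Fnx

/-- A disjunctive splitting: a splitting where `Fx` and `Fnx` have no clause `σ_i`
(clause of `Φ` mentioning neither `x` nor `¬x`) in common. -/
def IsDisjSplitting (Φ : CNF V) (x : V) (Fx Fnx : CNF V) : Prop :=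
  ∃ S1 S2 : CNF V,
    S1 ⊆ Φ ∧ S2 ⊆ Φ ∧ Disjoint S1 S2 ∧
    (∀ C ∈ S1, (x, true) ∉ C ∧ (x, false) ∉ C) ∧
    (∀ C ∈ S2, (x, true) ∉ C ∧ (x, false) ∉ C) ∧
    Fx = ((Φ.filter (fun C => (x, true) ∈ C)).image (fun C => C.erase (x, true))) ∪ S1 ∧
    Fnx = ((Φ.filter (fun C => (x, false) ∈ C)).image (fun C => C.erase (x, false))) ∪ S2 ∧
    CNF.minUnsat Fx ∧ CNF.minUnsat Fnx

end MoreDefs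

/-- The formula `α = {(a ∨ b), (a ∨ ¬b), (¬a ∨ b), (¬a ∨ ¬b)}`, with `a = 0`, `b = 1`. -/
def alphaF : CNF ℕ :=
  {({(0, true), (1, true)} : Clause ℕ),
   ({(0, true), (1, false)} : Clause ℕ),
   ({(0, false), (1, true)} : Clause ℕ),
   ({(0, false), (1, false)} : Clause ℕ)}



/-! ### Auxiliary development -/

section AuxTrees

variable {V : Type} [DecidableEq V]

/-- Resolution derivation trees, nodes labeled by an index into a step list. -/
inductive RTree (V : Type) : Type
  | leaf : Clause V → RTree V
  | node : ℕ → RStep V → RTree V → RTree V → RTree V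

namespace RTree

/-- The clause at the root of a tree. -/
def rootC : RTree V → Clause V
  | leaf C => C
  | node _ s _ _ => s.res

/-- The multiset of leaf clauses. -/
def leaves : RTree V → Multiset (Clause V)
  | leaf C => {C}
  | node _ _ t1 t2 => t1.leaves + t2.leaves

/-- The multiset of node labels. -/
def labels : RTree V → Multiset ℕ
  | leaf _ => 0
  | node i _ t1 t2 => i ::ₘ (t1.labels + t2.labels)

/-- Subtree at a position (path of booleans from the root). -/
def sub : RTree V → List Bool → Option (RTree V)
  | t, [] => some t
  | leaf _, _ :: _ => none
  | node _ _ t1 _, true :: p => t1.sub p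
  | node _ _ _ t2, false :: p => t2.sub p

lemma sub_nil (t : RTree V) : t.sub [] = some t := by cases t <;> rfl

lemma sub_append (t : RTree V) (p q : List Bool) :
    t.sub (p ++ q) = (t.sub p).bind (fun u => u.sub q) := by
  induction p generalizing t with
  | nil => rw [sub_nil]; rfl
  | cons b p ih =>
    cases t with
    | leaf C => rfl
    | node i s t1 t2 => cases b <;> (show RTree.sub _ (p ++ q) = _; rw [ih]; rfl)

end RTree

open RTree

/-- Compatibility of a tree with a step list and a formula. -/
def Compat (Φ : CNF V) (L : List (RStep V)) : RTree V → Prop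
  | .leaf C => C ∈ Φ
  | .node i s t1 t2 => (∃ h : i < L.length, L.get ⟨i, h⟩ = s) ∧ RStep.valid s ∧
      t1.rootC = s.c1 ∧ t2.rootC = s.c2 ∧ Compat Φ L t1 ∧ Compat Φ L t2

lemma compat_sub {Φ : CNF V} {L : List (RStep V)} {t u : RTree V} {p : List Bool}
    (hc : Compat Φ L t) (h : t.sub p = some u) : Compat Φ L u := by
  induction p generalizing t with
  | nil => rw [sub_nil] at h; cases h; exact hc
  | cons b p ih =>
    cases t with
    | leaf C => exact absurd h (by simp [RTree.sub])
    | node i s t1 t2 =>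
      cases b with
      | true => exact ih hc.2.2.2.2.1 h
      | false => exact ih hc.2.2.2.2.2 h

lemma mem_labels_iff {t : RTree V} {i : ℕ} :
    i ∈ t.labels ↔ ∃ p s t1 t2, t.sub p = some (.node i s t1 t2) := by
  induction t with
  | leaf C =>
    simp only [RTree.labels, Multiset.notMem_zero, false_iff]
    rintro ⟨p, s, t1, t2, hp⟩
    cases p with
    | nil => rw [sub_nil] at hp; exact absurd hp (by simp)
    | cons b p => exact absurd hp (by simp [RTree.sub])
  | node j s t1 t2 ih1 ih2 =>
    constructor
    · intro hm
      rcases Multiset.mem_cons.1 hm with rfl | hm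
      · exact ⟨[], s, t1, t2, sub_nil _⟩
      · rcases Multiset.mem_add.1 hm with hm | hm
        · obtain ⟨p, s', a, b, hp⟩ := ih1.1 hm
          exact ⟨true :: p, s', a, b, hp⟩
        · obtain ⟨p, s', a, b, hp⟩ := ih2.1 hm
          exact ⟨false :: p, s', a, b, hp⟩
    · rintro ⟨p, s', a, b, hp⟩
      cases p with
      | nil =>
        rw [sub_nil] at hp
        obtain ⟨rfl, -⟩ : j = i ∧ _ := by
          injection hp with hp; injection hp with h1 h2 h3 h4; exact ⟨h1, h2⟩
        exact Multiset.mem_cons_self _ _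
      | cons bb p =>
        cases bb with
        | true => exact Multiset.mem_cons.2 (Or.inr (Multiset.mem_add.2 (Or.inl (ih1.2 ⟨p, s', a, b, hp⟩))))
        | false => exact Multiset.mem_cons.2 (Or.inr (Multiset.mem_add.2 (Or.inr (ih2.2 ⟨p, s', a, b, hp⟩))))

lemma mem_leaves_iff {t : RTree V} {C : Clause V} :
    C ∈ t.leaves ↔ ∃ p, t.sub p = some (.leaf C) := by
  induction t with
  | leaf D =>
    simp only [RTree.leaves, Multiset.mem_singleton]
    constructor
    · rintro rfl; exact ⟨[], sub_nil _⟩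
    · rintro ⟨p, hp⟩
      cases p with
      | nil => rw [sub_nil] at hp; injection hp with hp; injection hp with h; exact h.symm
      | cons b p => exact absurd hp (by simp [RTree.sub])
  | node j s t1 t2 ih1 ih2 =>
    constructor
    · intro hm
      rcases Multiset.mem_add.1 hm with hm | hm
      · obtain ⟨p, hp⟩ := ih1.1 hm; exact ⟨true :: p, hp⟩
      · obtain ⟨p, hp⟩ := ih2.1 hm; exact ⟨false :: p, hp⟩
    · rintro ⟨p, hp⟩
      cases p with
      | nil => rw [sub_nil] at hp; exact absurd hp (by simp)
      | cons bb p =>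
        cases bb with
        | true => exact Multiset.mem_add.2 (Or.inl (ih1.2 ⟨p, hp⟩))
        | false => exact Multiset.mem_add.2 (Or.inr (ih2.2 ⟨p, hp⟩))

lemma two_le_count_labels {t : RTree V} {p q : List Bool} {i : ℕ}
    {s1 s2 : RStep V} {a1 b1 a2 b2 : RTree V}
    (hp : t.sub p = some (.node i s1 a1 b1)) (hq : t.sub q = some (.node i s2 a2 b2))
    (hpq : p ≠ q) : 2 ≤ t.labels.count i := by
  induction t generalizing p q with
  | leaf C =>
    cases p with
    | nil => rw [sub_nil] at hp; exact absurd hp (by simp)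
    | cons b p => exact absurd hp (by simp [RTree.sub])
  | node j s t1 t2 ih1 ih2 =>
    have hcount : (RTree.node j s t1 t2).labels.count i =
        (if i = j then 1 else 0) + (t1.labels.count i + t2.labels.count i) := by
      simp [RTree.labels, Multiset.count_cons, Multiset.count_add]; omega
    rw [hcount]
    have hmem1 : ∀ {tt : RTree V} {p' : List Bool} {s' a b'}, tt.sub p' = some (.node i s' a b') →
        1 ≤ tt.labels.count i := by
      intro tt p' s' a b' h
      exact Multiset.one_le_count_iff_mem.2 (mem_labels_iff.2 ⟨p', s', a, b', h⟩)
    cases p with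
    | nil =>
      rw [sub_nil] at hp
      have hij : i = j := by injection hp with hp; injection hp with h1; exact h1.symm
      cases q with
      | nil => exact absurd rfl hpq
      | cons bq q =>
        rw [if_pos hij]
        cases bq with
        | true =>
          have : 1 ≤ t1.labels.count i := hmem1 (show t1.sub q = some (.node i s2 a2 b2) from hq)
          omega
        | false =>
          have : 1 ≤ t2.labels.count i := hmem1 (show t2.sub q = some (.node i s2 a2 b2) from hq)
          omega
    | cons bp p =>
      cases q with
      | nil =>
        rw [sub_nil] at hq
        have hij : i = j := by injection hq with hq; injection hq with h1; exact h1.symm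
        rw [if_pos hij]
        cases bp with
        | true =>
          have : 1 ≤ t1.labels.count i := hmem1 (show t1.sub p = some (.node i s1 a1 b1) from hp)
          omega
        | false =>
          have : 1 ≤ t2.labels.count i := hmem1 (show t2.sub p = some (.node i s1 a1 b1) from hp)
          omega
      | cons bq q =>
        cases bp <;> cases bq
        · have := ih2 (show t2.sub p = some (.node i s1 a1 b1) from hp)
            (show t2.sub q = some (.node i s2 a2 b2) from hq) (by intro h; exact hpq (by rw [h]))
          omega
        · have h1 : 1 ≤ t1.labels.count i := hmem1 (show t1.sub q = some (.node i s2 a2 b2) from hq)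
          have h2 : 1 ≤ t2.labels.count i := hmem1 (show t2.sub p = some (.node i s1 a1 b1) from hp)
          omega
        · have h1 : 1 ≤ t2.labels.count i := hmem1 (show t2.sub q = some (.node i s2 a2 b2) from hq)
          have h2 : 1 ≤ t1.labels.count i := hmem1 (show t1.sub p = some (.node i s1 a1 b1) from hp)
          omega
        · have := ih1 (show t1.sub p = some (.node i s1 a1 b1) from hp)
            (show t1.sub q = some (.node i s2 a2 b2) from hq) (by intro h; exact hpq (by rw [h]))
          omega

lemma exists_two_pos_of_labels {t : RTree V} {i : ℕ} (h : 2 ≤ t.labels.count i) :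
    ∃ p q, p ≠ q ∧ (∃ s a b, t.sub p = some (.node i s a b)) ∧
      (∃ s a b, t.sub q = some (.node i s a b)) := by
  induction t with
  | leaf C => simp [RTree.labels] at h
  | node j s t1 t2 ih1 ih2 =>
    have hcount : (RTree.node j s t1 t2).labels.count i =
        (if i = j then 1 else 0) + (t1.labels.count i + t2.labels.count i) := by
      simp [RTree.labels, Multiset.count_cons, Multiset.count_add]; omega
    rw [hcount] at h
    by_cases hij : i = j
    · subst hij
      rw [if_pos rfl] at h
      have : 1 ≤ t1.labels.count i ∨ 1 ≤ t2.labels.count i := by omega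
      rcases this with h1 | h1
      · obtain ⟨p, s', a, b, hp⟩ := mem_labels_iff.1 (Multiset.one_le_count_iff_mem.1 h1)
        exact ⟨[], true :: p, by simp, ⟨s, t1, t2, sub_nil _⟩, ⟨s', a, b, hp⟩⟩
      · obtain ⟨p, s', a, b, hp⟩ := mem_labels_iff.1 (Multiset.one_le_count_iff_mem.1 h1)
        exact ⟨[], false :: p, by simp, ⟨s, t1, t2, sub_nil _⟩, ⟨s', a, b, hp⟩⟩
    · rw [if_neg hij] at h
      rcases Nat.lt_or_ge (t1.labels.count i) 2 with h1 | h1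
      · rcases Nat.lt_or_ge (t2.labels.count i) 2 with h2 | h2
        · have e1 : 1 ≤ t1.labels.count i := by omega
          have e2 : 1 ≤ t2.labels.count i := by omega
          obtain ⟨p, s1, a1, b1, hp⟩ := mem_labels_iff.1 (Multiset.one_le_count_iff_mem.1 e1)
          obtain ⟨q, s2, a2, b2, hq⟩ := mem_labels_iff.1 (Multiset.one_le_count_iff_mem.1 e2)
          exact ⟨true :: p, false :: q, by simp, ⟨s1, a1, b1, hp⟩, ⟨s2, a2, b2, hq⟩⟩
        · obtain ⟨p, q, hpq, ⟨s1, a1, b1, hp⟩, ⟨s2, a2, b2, hq⟩⟩ := ih2 h2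
          exact ⟨false :: p, false :: q, by simpa using hpq, ⟨s1, a1, b1, hp⟩, ⟨s2, a2, b2, hq⟩⟩
      · obtain ⟨p, q, hpq, ⟨s1, a1, b1, hp⟩, ⟨s2, a2, b2, hq⟩⟩ := ih1 h1
        exact ⟨true :: p, true :: q, by simpa using hpq, ⟨s1, a1, b1, hp⟩, ⟨s2, a2, b2, hq⟩⟩

lemma exists_two_pos_of_leaves {t : RTree V} {C : Clause V} (h : 2 ≤ t.leaves.count C) :
    ∃ p q, p ≠ q ∧ t.sub p = some (.leaf C) ∧ t.sub q = some (.leaf C) := by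
  induction t with
  | leaf D =>
    have hc : (RTree.leaf D : RTree V).leaves.count C = if C = D then 1 else 0 := by
      simp [RTree.leaves, Multiset.count_singleton]
    rw [hc] at h
    split at h <;> omega
  | node j s t1 t2 ih1 ih2 =>
    have hcount : (RTree.node j s t1 t2).leaves.count C =
        t1.leaves.count C + t2.leaves.count C := by
      simp [RTree.leaves, Multiset.count_add]
    rw [hcount] at h
    rcases Nat.lt_or_ge (t1.leaves.count C) 2 with h1 | h1
    · rcases Nat.lt_or_ge (t2.leaves.count C) 2 with h2 | h2
      · have e1 : 1 ≤ t1.leaves.count C := by omega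
        have e2 : 1 ≤ t2.leaves.count C := by omega
        obtain ⟨p, hp⟩ := mem_leaves_iff.1 (Multiset.one_le_count_iff_mem.1 e1)
        obtain ⟨q, hq⟩ := mem_leaves_iff.1 (Multiset.one_le_count_iff_mem.1 e2)
        exact ⟨true :: p, false :: q, by simp, hp, hq⟩
      · obtain ⟨p, q, hpq, hp, hq⟩ := ih2 h2
        exact ⟨false :: p, false :: q, by simpa using hpq, hp, hq⟩
    · obtain ⟨p, q, hpq, hp, hq⟩ := ih1 h1
      exact ⟨true :: p, true :: q, by simpa using hpq, hp, hq⟩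



lemma erase_union_self {D : Finset (Lit V)} {x : V}
    (h1 : (x, true) ∈ D) (h2 : (x, false) ∈ D) :
    D.erase (x, true) ∪ D.erase (x, false) = D := by
  ext l
  simp only [Finset.mem_union, Finset.mem_erase]
  constructor
  · rintro (⟨-, h⟩ | ⟨-, h⟩) <;> exact h
  · intro hl
    by_cases hx : l = (x, true)
    · right; exact ⟨by simp [hx], hl⟩
    · left; exact ⟨hx, hl⟩

/-- The surviving-literal lemma: a literal of a clause inside the tree either survives
to the root or its variable is matched at a strict ancestor node. -/
lemma survive {Φ : CNF V} {L : List (RStep V)} {t u : RTree V} {p : List Bool}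
    (hc : Compat Φ L t) (hp : t.sub p = some u) {l : Lit V} (hl : l ∈ u.rootC) :
    l ∈ t.rootC ∨ ∃ q, q <+: p ∧ q ≠ p ∧
      ∃ j s' a b, t.sub q = some (.node j s' a b) ∧ s'.mv = l.1 := by
  induction p generalizing t with
  | nil => rw [sub_nil] at hp; cases hp; exact Or.inl hl
  | cons bb p ih =>
    cases t with
    | leaf C => exact absurd hp (by simp [RTree.sub])
    | node j s t1 t2 =>
      obtain ⟨hL, hval, h1, h2, hc1, hc2⟩ := hc
      cases bb with
      | true =>
        rcases ih hc1 hp with hin | ⟨q, hpre, hne, j', s', a, b, hsub, hmv⟩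
        · by_cases hml : l = (s.mv, true)
          · exact Or.inr ⟨[], List.nil_prefix, by simp, j, s, t1, t2, sub_nil _, by rw [hml]⟩
          · left
            show l ∈ s.res
            rw [hval.2.2]
            exact Finset.mem_union_left _ (Finset.mem_erase.2 ⟨hml, h1 ▸ hin⟩)
        · exact Or.inr ⟨true :: q, by
            obtain ⟨r, hr⟩ := hpre; exact ⟨r, by rw [← hr]; rfl⟩,
            by simpa using hne, j', s', a, b, hsub, hmv⟩
      | false =>
        rcases ih hc2 hp with hin | ⟨q, hpre, hne, j', s', a, b, hsub, hmv⟩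
        · by_cases hml : l = (s.mv, false)
          · exact Or.inr ⟨[], List.nil_prefix, by simp, j, s, t1, t2, sub_nil _, by rw [hml]⟩
          · left
            show l ∈ s.res
            rw [hval.2.2]
            exact Finset.mem_union_right _ (Finset.mem_erase.2 ⟨hml, h2 ▸ hin⟩)
        · exact Or.inr ⟨false :: q, by
            obtain ⟨r, hr⟩ := hpre; exact ⟨r, by rw [← hr]; rfl⟩,
            by simpa using hne, j', s', a, b, hsub, hmv⟩

/-- Properties of the parent node of a position. -/
lemma parent_props {Φ : CNF V} {L : List (RStep V)} {t u : RTree V} {q : List Bool} {b : Bool}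
    (hc : Compat Φ L t) (h : t.sub (q ++ [b]) = some u) :
    ∃ j s' t1 t2, t.sub q = some (.node j s' t1 t2) ∧ (s'.mv, b) ∈ u.rootC ∧
      u.rootC = (if b then s'.c1 else s'.c2) ∧
      (∀ lz ∈ u.rootC, lz.1 ≠ s'.mv → lz ∈ s'.res) := by
  rw [sub_append] at h
  cases hw : t.sub q with
  | none => rw [hw] at h; exact absurd h (by simp)
  | some w =>
    rw [hw] at h
    have h : w.sub [b] = some u := h
    cases w with
    | leaf C => exact absurd h (by simp [RTree.sub])
    | node j s' t1 t2 =>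
      obtain ⟨-, hval, h1, h2, -, -⟩ := compat_sub hc hw
      cases b with
      | true =>
        have h' : t1.sub [] = some u := h
        have hu : u = t1 := by rw [sub_nil] at h'; injection h' with h'; exact h'.symm
        subst hu
        refine ⟨j, s', u, t2, rfl, by rw [h1]; exact hval.1, by simp [h1], ?_⟩
        intro lz hlz hne
        rw [hval.2.2]
        exact Finset.mem_union_left _ (Finset.mem_erase.2
          ⟨by intro hh; exact hne (by rw [hh]), h1 ▸ hlz⟩)
      | false =>
        have h' : t2.sub [] = some u := h
        have hu : u = t2 := by rw [sub_nil] at h'; injection h' with h'; exact h'.symm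
        subst hu
        refine ⟨j, s', t1, u, rfl, by rw [h2]; exact hval.2.1, by simp [h2], ?_⟩
        intro lz hlz hne
        rw [hval.2.2]
        exact Finset.mem_union_right _ (Finset.mem_erase.2
          ⟨by intro hh; exact hne (by rw [hh]), h2 ▸ hlz⟩)

/-- With distinct matching variables, the index of a step is determined by its variable. -/
lemma mv_inj {L : List (RStep V)} (hnd : (L.map RStep.mv).Nodup)
    {i j : ℕ} {hi : i < L.length} {hj : j < L.length}
    (h : (L.get ⟨i, hi⟩).mv = (L.get ⟨j, hj⟩).mv) : i = j := by
  have hi' : i < (L.map RStep.mv).length := by simpa using hi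
  have hj' : j < (L.map RStep.mv).length := by simpa using hj
  have : (L.map RStep.mv).get ⟨i, hi'⟩ = (L.map RStep.mv).get ⟨j, hj'⟩ := by
    simpa [List.getElem_map] using h
  have := (List.Nodup.get_inj_iff hnd).1 this
  exact Fin.val_eq_of_eq this

lemma prefix_ne_length_lt {w p : List Bool} (hpre : w <+: p) (hne : w ≠ p) :
    w.length < p.length := by
  rcases Nat.lt_or_ge w.length p.length with h | h
  · exact h
  · exact absurd (List.IsPrefix.eq_of_length hpre
      (le_antisymm hpre.length_le h)) hne

/-- Key descent lemma: in a compatible tree refuting `Φ` (root `∅`), no label occurs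
at two distinct positions. -/
lemma no_two_pos {Φ : CNF V} {L : List (RStep V)} (hnd : (L.map RStep.mv).Nodup)
    {t : RTree V} (hc : Compat Φ L t) (hroot : t.rootC = ∅) :
    ∀ n : ℕ, ∀ p q : List Bool, p.length + q.length ≤ n →
      ∀ (i : ℕ) (s s' : RStep V) (a1 b1 a2 b2 : RTree V),
        t.sub p = some (.node i s a1 b1) → t.sub q = some (.node i s' a2 b2) → p = q := by
  have hstep : ∀ {p' : List Bool} {i' : ℕ} {s'' : RStep V} {a b : RTree V},
      t.sub p' = some (.node i' s'' a b) →
      ∃ h : i' < L.length, L.get ⟨i', h⟩ = s'' := by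
    intro p' i' s'' a b h
    exact (compat_sub hc h).1
  have hlab : ∀ {w1 w2 : List Bool} {i1 i2 : ℕ} {s1 s2 : RStep V} {a b c d : RTree V},
      t.sub w1 = some (.node i1 s1 a b) → t.sub w2 = some (.node i2 s2 c d) →
      s1.mv = s2.mv → i1 = i2 := by
    intro w1 w2 i1 i2 s1 s2 a b c d h1 h2 hmv
    obtain ⟨hl1, hg1⟩ := hstep h1
    obtain ⟨hl2, hg2⟩ := hstep h2
    exact mv_inj hnd (by rw [hg1, hg2]; exact hmv)
  intro n
  induction n using Nat.strong_induction_on with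
  | _ n ih =>
  intro p q hlen i s s' a1 b1 a2 b2 hp hq
  by_contra hpq
  have hss : s = s' := by
    obtain ⟨hi1, hg1⟩ := hstep hp
    obtain ⟨hi2, hg2⟩ := hstep hq
    rw [← hg1, ← hg2]
  subst hss
  rcases List.eq_nil_or_concat p with rfl | ⟨p', bp, rfl⟩
  · rcases List.eq_nil_or_concat q with rfl | ⟨q', bq, rfl⟩
    · exact hpq rfl
    · rw [List.concat_eq_append] at hq hpq hlen
      rw [sub_nil] at hp
      have hres : s.res = ∅ := by
        have ht : t.rootC = s.res := by
          injection hp with hp; rw [hp]; rfl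
        rw [← ht, hroot]
      obtain ⟨j2, s2, u1, u2, hw, hmem, -, -⟩ := parent_props hc hq
      have : (s2.mv, bq) ∈ s.res := hmem
      rw [hres] at this
      exact absurd this (Finset.notMem_empty _)
  · rw [List.concat_eq_append] at hp hpq hlen
    rcases List.eq_nil_or_concat q with rfl | ⟨q', bq, rfl⟩
    · rw [sub_nil] at hq
      have hres : s.res = ∅ := by
        have ht : t.rootC = s.res := by
          injection hq with hq; rw [hq]; rfl
        rw [← ht, hroot]
      obtain ⟨j2, s2, u1, u2, hw, hmem, -, -⟩ := parent_props hc hp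
      have : (s2.mv, bp) ∈ s.res := hmem
      rw [hres] at this
      exact absurd this (Finset.notMem_empty _)
    · rw [List.concat_eq_append] at hq hpq hlen
      obtain ⟨jp, sp, u1, u2, hwp, hmemp, hchp, hclp⟩ := parent_props hc hp
      obtain ⟨jq, sq, v1, v2, hwq, hmemq, hchq, hclq⟩ := parent_props hc hq
      have hmemp' : (sp.mv, bp) ∈ s.res := hmemp
      have hmemq' : (sq.mv, bq) ∈ s.res := hmemq
      simp only [List.length_append, List.length_singleton] at hlen
      by_cases hj : jp = jq
      · subst hj
        by_cases hpq' : p' = q'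
        · subst hpq'
          have hsq : sp = sq := by
            rw [hwp] at hwq
            injection hwq with hwq
            injection hwq
          subst hsq
          have hbp : bp ≠ bq := by
            intro h; exact hpq (by rw [h])
          have hvalp : IsResolvent sp.c1 sp.c2 sp.res sp.mv := (compat_sub hc hwp).2.1
          have hboth : (sp.mv, true) ∈ s.res ∧ (sp.mv, false) ∈ s.res := by
            cases bp with
            | true =>
              cases bq with
              | true => exact absurd rfl hbp
              | false => exact ⟨hmemp', hmemq'⟩
            | false =>
              cases bq with
              | true => exact ⟨hmemq', hmemp'⟩
              | false => exact absurd rfl hbp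
          have hc1 : sp.c1 = s.res := by
            cases bp with
            | true => exact hchp.symm
            | false =>
              cases bq with
              | true => exact hchq.symm
              | false => exact absurd rfl hbp
          have hc2 : sp.c2 = s.res := by
            cases bp with
            | true =>
              cases bq with
              | true => exact absurd rfl hbp
              | false => exact hchq.symm
            | false => exact hchp.symm
          have hres_eq : sp.res = s.res := by
            rw [hvalp.2.2, hc1, hc2, erase_union_self hboth.1 hboth.2]
          have hin : (sp.mv, true) ∈ (RTree.node jp sp u1 u2).rootC := by
            show (sp.mv, true) ∈ sp.res
            rw [hres_eq]; exact hboth.1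
          rcases survive hc hwp hin with hin0 | ⟨w, hpre, hne, jw, sw, aw, bw, hsubw, hmvw⟩
          · rw [hroot] at hin0
            exact absurd hin0 (Finset.notMem_empty _)
          · have hjw : jw = jp := hlab hsubw hwp hmvw
            subst hjw
            have hwlt := prefix_ne_length_lt hpre hne
            have : w = p' := by
              refine ih (w.length + p'.length) (by omega) w p' (le_refl _) jw sw sp aw bw u1 u2 hsubw hwp
            exact hne this
        · have : p' = q' := by
            refine ih (p'.length + q'.length) (by omega) p' q' (le_refl _) jp sp sq u1 u2 v1 v2 hwp hwq
          exact hpq' this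
      · have hmv : sp.mv ≠ sq.mv := fun h => hj (hlab hwp hwq h)
        have hlz : (sq.mv, bq) ∈ sp.res :=
          hclp _ hmemq' (by simpa using hmv.symm)
        have hin : (sq.mv, bq) ∈ (RTree.node jp sp u1 u2).rootC := hlz
        rcases survive hc hwp hin with hin0 | ⟨w, hpre, hne, jw, sw, aw, bw, hsubw, hmvw⟩
        · rw [hroot] at hin0
          exact absurd hin0 (Finset.notMem_empty _)
        · have hjw : jw = jq := hlab hsubw hwq hmvw
          subst hjw
          have hwlt := prefix_ne_length_lt hpre hne
          by_cases hwq' : w = q'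
          · subst hwq'
            have hly : (sp.mv, bp) ∈ sq.res :=
              hclq _ hmemp' (by simpa using hmv)
            have hin2 : (sp.mv, bp) ∈ (RTree.node jw sq v1 v2).rootC := hly
            rcases survive hc hwq hin2 with hin0 | ⟨w', hpre', hne', jw', sw', aw', bw', hsubw', hmvw'⟩
            · rw [hroot] at hin0
              exact absurd hin0 (Finset.notMem_empty _)
            · have hjw' : jw' = jp := hlab hsubw' hwp hmvw'
              subst hjw'
              have hwlt' := prefix_ne_length_lt hpre' hne'
              have hthis : w' = p' := by
                refine ih (w'.length + p'.length) (by omega) w' p' (le_refl _) jw' sw' sp aw' bw' u1 u2 hsubw' hwp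
              rw [hthis] at hwlt'
              omega
          · have : w = q' := by
              refine ih (w.length + q'.length) (by omega) w q' (le_refl _) jw sw sq aw bw v1 v2 hsubw hwq
            exact hwq' this

lemma labels_nodup {Φ : CNF V} {L : List (RStep V)} (hnd : (L.map RStep.mv).Nodup)
    {t : RTree V} (hc : Compat Φ L t) (hroot : t.rootC = ∅) : t.labels.Nodup := by
  rw [Multiset.nodup_iff_count_le_one]
  intro i
  by_contra h
  push_neg at h
  obtain ⟨p, q, hpq, ⟨s1, a1, b1, hp⟩, ⟨s2, a2, b2, hq⟩⟩ :=
    exists_two_pos_of_labels (t := t) (i := i) (by omega)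
  exact hpq (no_two_pos hnd hc hroot (p.length + q.length) p q (le_refl _)
    i s1 s2 a1 b1 a2 b2 hp hq)

lemma pos_of_mv {Φ : CNF V} {L : List (RStep V)} (hnd : (L.map RStep.mv).Nodup)
    {t : RTree V} (hc : Compat Φ L t) (hroot : t.rootC = ∅)
    {w1 w2 : List Bool} {i1 i2 : ℕ} {s1 s2 : RStep V} {a b c d : RTree V}
    (h1 : t.sub w1 = some (.node i1 s1 a b)) (h2 : t.sub w2 = some (.node i2 s2 c d))
    (hmv : s1.mv = s2.mv) : w1 = w2 := by
  obtain ⟨hl1, hg1⟩ := (compat_sub hc h1).1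
  obtain ⟨hl2, hg2⟩ := (compat_sub hc h2).1
  have hii : i1 = i2 := mv_inj hnd (by rw [hg1, hg2]; exact hmv)
  subst hii
  exact no_two_pos hnd hc hroot (w1.length + w2.length) w1 w2 (le_refl _)
    i1 s1 s2 a b c d h1 h2

lemma leaves_nodup {Φ : CNF V} {L : List (RStep V)} (hnd : (L.map RStep.mv).Nodup)
    {t : RTree V} (hc : Compat Φ L t) (hroot : t.rootC = ∅)
    (hem : (∅ : Clause V) ∉ Φ) : t.leaves.Nodup := by
  rw [Multiset.nodup_iff_count_le_one]
  intro C
  by_contra h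
  push_neg at h
  obtain ⟨p, q, hpq, hp, hq⟩ := exists_two_pos_of_leaves (t := t) (C := C) (by omega)
  have hCΦ : C ∈ Φ := compat_sub hc hp
  have hCne : C ≠ ∅ := fun hh => hem (hh ▸ hCΦ)
  have hnil : ∀ {r : List Bool}, t.sub r = some (.leaf C) → r ≠ [] := by
    intro r hr hr0
    subst hr0
    rw [sub_nil] at hr
    injection hr with hr
    rw [hr] at hroot
    exact hCne hroot
  rcases List.eq_nil_or_concat p with rfl | ⟨p', bp, rfl⟩
  · exact hnil hp rfl
  rcases List.eq_nil_or_concat q with rfl | ⟨q', bq, rfl⟩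
  · exact hnil hq rfl
  simp only [List.concat_eq_append] at hp hq hpq
  obtain ⟨jp, sp, u1, u2, hwp, hmemp, hchp, hclp⟩ := parent_props hc hp
  obtain ⟨jq, sq, v1, v2, hwq, hmemq, hchq, hclq⟩ := parent_props hc hq
  have hmemp' : (sp.mv, bp) ∈ C := hmemp
  have hmemq' : (sq.mv, bq) ∈ C := hmemq
  -- the matcher of (sp.mv, bp) seen from the q-copy is the parent of p
  have hs1 := survive hc hq (show (sp.mv, bp) ∈ (RTree.leaf C).rootC from hmemp')
  rcases hs1 with hin0 | ⟨w, hpre, hne, jw, sw, aw, bw, hsubw, hmvw⟩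
  · rw [hroot] at hin0; exact absurd hin0 (Finset.notMem_empty _)
  have hwp' : w = p' := pos_of_mv hnd hc hroot hsubw hwp hmvw
  rw [hwp'] at hpre hne
  have hs2 := survive hc hp (show (sq.mv, bq) ∈ (RTree.leaf C).rootC from hmemq')
  rcases hs2 with hin0 | ⟨w2, hpre2, hne2, jw2, sw2, aw2, bw2, hsubw2, hmvw2⟩
  · rw [hroot] at hin0; exact absurd hin0 (Finset.notMem_empty _)
  have hwq' : w2 = q' := pos_of_mv hnd hc hroot hsubw2 hwq hmvw2
  rw [hwq'] at hpre2 hne2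
  -- mutual prefixes up to last element
  have hq'q : q' <+: q' ++ [bq] := ⟨[bq], rfl⟩
  have hp'p : p' <+: p' ++ [bp] := ⟨[bp], rfl⟩
  have hl1 : p'.length < (q' ++ [bq]).length := prefix_ne_length_lt hpre hne
  have hl2 : q'.length < (p' ++ [bp]).length := prefix_ne_length_lt hpre2 hne2
  rw [List.length_append, List.length_singleton] at hl1 hl2
  have hpq' : p' <+: q' := List.prefix_of_prefix_length_le hpre hq'q (by omega)
  have hqp' : q' <+: p' := List.prefix_of_prefix_length_le hpre2 hp'p (by omega)
  have heq : p' = q' := List.IsPrefix.eq_of_length hpq'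
    (le_antisymm hpq'.length_le hqp'.length_le)
  subst heq
  have hsq : sp = sq := by
    rw [hwp] at hwq
    injection hwq with hwq
    injection hwq
  subst hsq
  have hbp : bp ≠ bq := fun hh => hpq (by rw [hh])
  have hvalp : IsResolvent sp.c1 sp.c2 sp.res sp.mv := (compat_sub hc hwp).2.1
  have hboth : (sp.mv, true) ∈ C ∧ (sp.mv, false) ∈ C := by
    cases bp with
    | true =>
      cases bq with
      | true => exact absurd rfl hbp
      | false => exact ⟨hmemp', hmemq'⟩
    | false =>
      cases bq with
      | true => exact ⟨hmemq', hmemp'⟩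
      | false => exact absurd rfl hbp
  have hc1 : sp.c1 = C := by
    cases bp with
    | true => exact hchp.symm
    | false =>
      cases bq with
      | true => exact hchq.symm
      | false => exact absurd rfl hbp
  have hc2 : sp.c2 = C := by
    cases bp with
    | true =>
      cases bq with
      | true => exact absurd rfl hbp
      | false => exact hchq.symm
    | false => exact hchp.symm
  have hres_eq : sp.res = C := by
    rw [hvalp.2.2, hc1, hc2, erase_union_self hboth.1 hboth.2]
  have hin : (sp.mv, true) ∈ (RTree.node jp sp u1 u2).rootC := by
    show (sp.mv, true) ∈ sp.res
    rw [hres_eq]; exact hboth.1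
  rcases survive hc hwp hin with hin0 | ⟨w3, hpre3, hne3, jw3, sw3, aw3, bw3, hsubw3, hmvw3⟩
  · rw [hroot] at hin0; exact absurd hin0 (Finset.notMem_empty _)
  · exact hne3 (pos_of_mv hnd hc hroot hsubw3 hwp hmvw3)

lemma leaves_mem {Φ : CNF V} {L : List (RStep V)} {t : RTree V}
    (hc : Compat Φ L t) : ∀ C ∈ t.leaves, C ∈ Φ := by
  induction t with
  | leaf D =>
    intro C hC
    rw [show (RTree.leaf D : RTree V).leaves = {D} from rfl, Multiset.mem_singleton] at hC
    subst hC
    exact hc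
  | node i s t1 t2 ih1 ih2 =>
    intro C hC
    rcases Multiset.mem_add.1 hC with hC | hC
    · exact ih1 hc.2.2.2.2.1 C hC
    · exact ih2 hc.2.2.2.2.2 C hC

/-- Replaying a compatible tree as read-once resolution steps on a multiset. -/
lemma tree_ror {Φ : CNF V} {L : List (RStep V)} {t : RTree V}
    (hc : Compat Φ L t) : ∀ S : Multiset (Clause V), t.leaves ≤ S →
    Relation.ReflTransGen RORStep S (t.rootC ::ₘ (S - t.leaves)) := by
  induction t with
  | leaf C =>
    intro S hle
    have hCm : C ∈ S := by
      have : {C} ≤ S := hle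
      simpa using Multiset.mem_of_le this (Multiset.mem_singleton_self C)
    have : (RTree.leaf C : RTree V).rootC ::ₘ (S - (RTree.leaf C : RTree V).leaves) = S := by
      show C ::ₘ (S - {C}) = S
      rw [Multiset.sub_singleton, Multiset.cons_erase hCm]
    rw [this]
  | node i s t1 t2 ih1 ih2 =>
    intro S hle
    obtain ⟨hL, hval, h1, h2, hc1, hc2⟩ := hc
    have hle' : t1.leaves + t2.leaves ≤ S := hle
    have hle1 : t1.leaves ≤ S := le_trans (le_add_right (le_refl _)) hle'
    have hle2 : t2.leaves ≤ S - t1.leaves := le_tsub_of_add_le_left hle'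
    have step1 := ih1 hc1 S hle1
    have step2 := ih2 hc2 (t1.rootC ::ₘ (S - t1.leaves))
      (le_trans hle2 (Multiset.le_cons_self _ _))
    have hmid : (t1.rootC ::ₘ (S - t1.leaves)) - t2.leaves =
        t1.rootC ::ₘ ((S - t1.leaves) - t2.leaves) := by
      rw [← Multiset.singleton_add, ← Multiset.singleton_add,
        add_tsub_assoc_of_le hle2]
    rw [hmid, tsub_tsub] at step2
    set Z := S - (t1.leaves + t2.leaves) with hZ
    have stepR : RORStep (t2.rootC ::ₘ t1.rootC ::ₘ Z) (s.res ::ₘ Z) := by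
      refine ⟨s.c1, s.c2, s.res, s.mv, ?_, ?_, hval, ?_⟩
      · rw [← h1]
        exact Multiset.mem_cons.2 (Or.inr (Multiset.mem_cons_self _ _))
      · have he : (t2.rootC ::ₘ t1.rootC ::ₘ Z).erase s.c1 = t2.rootC ::ₘ Z := by
          rw [← h1, Multiset.cons_swap, Multiset.erase_cons_head]
        rw [he, ← h2]
        exact Multiset.mem_cons_self _ _
      · have he : (t2.rootC ::ₘ t1.rootC ::ₘ Z).erase s.c1 = t2.rootC ::ₘ Z := by
          rw [← h1, Multiset.cons_swap, Multiset.erase_cons_head]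
        rw [he, ← h2, Multiset.erase_cons_head]
    exact (step1.trans step2).tail stepR

/-- Tree extraction from a resolution derivation list. -/
lemma extract {Φ : CNF V} {L : List (RStep V)} (hd : IsResDeriv Φ L) :
    ∀ (i : ℕ) (h : i < L.length), ∃ t : RTree V,
      Compat Φ L t ∧ t.rootC = (L.get ⟨i, h⟩).res := by
  intro i
  induction i using Nat.strong_induction_on with
  | _ i ih =>
  intro h
  obtain ⟨hv, h1, h2⟩ := hd i h
  have T1 : ∃ t1 : RTree V, Compat Φ L t1 ∧ t1.rootC = (L.get ⟨i, h⟩).c1 := by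
    rcases h1 with hm | ⟨j, hj, hres⟩
    · exact ⟨.leaf _, hm, rfl⟩
    · obtain ⟨t1, ht1, hr⟩ := ih j hj (by omega)
      exact ⟨t1, ht1, by rw [hr]; exact hres⟩
  have T2 : ∃ t2 : RTree V, Compat Φ L t2 ∧ t2.rootC = (L.get ⟨i, h⟩).c2 := by
    rcases h2 with hm | ⟨j, hj, hres⟩
    · exact ⟨.leaf _, hm, rfl⟩
    · obtain ⟨t2, ht2, hr⟩ := ih j hj (by omega)
      exact ⟨t2, ht2, by rw [hr]; exact hres⟩
  obtain ⟨t1, hct1, hr1⟩ := T1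
  obtain ⟨t2, hct2, hr2⟩ := T2
  exact ⟨.node i (L.get ⟨i, h⟩) t1 t2, ⟨⟨h, rfl⟩, hv, hr1, hr2, hct1, hct2⟩, rfl⟩

/-- Main auxiliary theorem: a Var-ROR refutation yields a read-once resolution refutation. -/
theorem varROR_imp_ROR {Φ : CNF V} (h : CNF.hasVarROR Φ) : CNF.hasROR Φ := by
  by_cases hem : (∅ : Clause V) ∈ Φ
  · exact ⟨Φ.val, Relation.ReflTransGen.refl, by simpa using hem⟩
  · obtain ⟨L, hd, hnd, s, hsL, hres⟩ := h
    obtain ⟨⟨i, hi⟩, hget⟩ := List.mem_iff_get.1 hsL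
    obtain ⟨t, hc, hr⟩ := extract hd i hi
    have hroot : t.rootC = ∅ := by rw [hr, hget, hres]
    have hlv := leaves_nodup hnd hc hroot hem
    have hsub : t.leaves ≤ Φ.val := by
      rw [Multiset.le_iff_count]
      intro a
      by_cases ha : a ∈ t.leaves
      · have e1 : t.leaves.count a ≤ 1 := Multiset.nodup_iff_count_le_one.1 hlv a
        have e2 : 1 ≤ Φ.val.count a :=
          Multiset.one_le_count_iff_mem.2 (leaves_mem hc a ha)
        omega
      · simp [Multiset.count_eq_zero.2 ha]
    have hch := tree_ror hc Φ.val hsub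
    rw [hroot] at hch
    exact ⟨_, hch, Multiset.mem_cons_self _ _⟩

end AuxTrees

section AlphaFacts

private def A1 : Clause ℕ := {(0, true), (1, true)}
private def A2 : Clause ℕ := {(0, true), (1, false)}
private def A3 : Clause ℕ := {(0, false), (1, true)}
private def A4 : Clause ℕ := {(0, false), (1, false)}
private def B1 : Clause ℕ := {(1, true)}
private def B2 : Clause ℕ := {(1, false)}
private def TT1 : Multiset (Clause ℕ) := B1 ::ₘ ((alphaF.val.erase A1).erase A3)
private def TT2 : Multiset (Clause ℕ) := B2 ::ₘ ((TT1.erase A2).erase A4)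
private def TT3 : Multiset (Clause ℕ) := (∅ : Clause ℕ) ::ₘ ((TT2.erase B1).erase B2)

lemma alpha_hasROR : CNF.hasROR alphaF := by
  refine ⟨TT3, ?_, Multiset.mem_cons_self _ _⟩
  have s1 : RORStep alphaF.val TT1 :=
    ⟨A1, A3, B1, 0, by decide, by decide, ⟨by decide, by decide, by decide⟩, rfl⟩
  have s2 : RORStep TT1 TT2 :=
    ⟨A2, A4, B2, 0, by decide, by decide, ⟨by decide, by decide, by decide⟩, rfl⟩
  have s3 : RORStep TT2 TT3 :=
    ⟨B1, B2, ∅, 1, by decide, by decide, ⟨by decide, by decide, by decide⟩, rfl⟩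
  exact Relation.ReflTransGen.head s1
    (Relation.ReflTransGen.head s2 (Relation.ReflTransGen.single s3))

lemma alpha_clause_vars : ∀ C ∈ alphaF, ∀ l ∈ C, l.1 < 2 := by decide

lemma alpha_clause_card : ∀ C ∈ alphaF, C.card = 2 := by decide

lemma alpha_is2CNF : CNF.is2CNF alphaF :=
  show ∀ C ∈ alphaF, C.card ≤ 2 by decide

lemma alpha_deriv_small {L : List (RStep ℕ)} (hd : IsResDeriv alphaF L) :
    ∀ (i : ℕ) (h : i < L.length),
      (∀ l ∈ (L.get ⟨i, h⟩).c1, l.1 < 2) ∧ (∀ l ∈ (L.get ⟨i, h⟩).c2, l.1 < 2) ∧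
      (∀ l ∈ (L.get ⟨i, h⟩).res, l.1 < 2) := by
  intro i
  induction i using Nat.strong_induction_on with
  | _ i ih =>
  intro h
  obtain ⟨hv, h1, h2⟩ := hd i h
  have hc1 : ∀ l ∈ (L.get ⟨i, h⟩).c1, l.1 < 2 := by
    rcases h1 with hm | ⟨j, hj, hres⟩
    · exact fun l hl => alpha_clause_vars _ hm l hl
    · rw [← hres]; exact (ih j hj (by omega)).2.2
  have hc2 : ∀ l ∈ (L.get ⟨i, h⟩).c2, l.1 < 2 := by
    rcases h2 with hm | ⟨j, hj, hres⟩
    · exact fun l hl => alpha_clause_vars _ hm l hl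
    · rw [← hres]; exact (ih j hj (by omega)).2.2
  refine ⟨hc1, hc2, ?_⟩
  intro l hl
  rw [hv.2.2] at hl
  rcases Finset.mem_union.1 hl with hl | hl
  · exact hc1 l (Finset.mem_of_mem_erase hl)
  · exact hc2 l (Finset.mem_of_mem_erase hl)

lemma alpha_not_varROR : ¬ CNF.hasVarROR alphaF := by
  rintro ⟨L, hd, hnd, s, hsL, hres⟩
  have hsmall := alpha_deriv_small hd
  have hmv : ∀ (i : ℕ) (h : i < L.length), (L.get ⟨i, h⟩).mv < 2 := by
    intro i h
    exact (hsmall i h).1 _ (hd i h).1.1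
  have hlen : L.length ≤ 2 := by
    have hcard : (L.map RStep.mv).toFinset.card = (L.map RStep.mv).length :=
      List.toFinset_card_of_nodup hnd
    have hsubset : (L.map RStep.mv).toFinset ⊆ Finset.range 2 := by
      intro v hv
      rw [List.mem_toFinset] at hv
      obtain ⟨s', hs', rfl⟩ := List.mem_map.1 hv
      obtain ⟨⟨j, hj⟩, hget⟩ := List.mem_iff_get.1 hs'
      rw [Finset.mem_range, ← hget]
      exact hmv j hj
    have hcc := Finset.card_le_card hsubset
    rw [hcard, Finset.card_range, List.length_map] at hcc
    exact hcc
  obtain ⟨⟨i, hi⟩, hget⟩ := List.mem_iff_get.1 hsL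
  obtain ⟨hv, h1, h2⟩ := hd i hi
  rw [hget] at hv h1 h2
  have hu : s.c1.erase (s.mv, true) ∪ s.c2.erase (s.mv, false) = ∅ := by
    rw [← hv.2.2, hres]
  obtain ⟨he1, he2⟩ := Finset.union_eq_empty.1 hu
  have hc1 : s.c1 = {(s.mv, true)} := by
    apply Finset.eq_singleton_iff_unique_mem.2 ⟨hv.1, ?_⟩
    intro x hx
    by_contra hne
    have hxx : x ∈ s.c1.erase (s.mv, true) := Finset.mem_erase.2 ⟨hne, hx⟩
    rw [he1] at hxx
    exact Finset.notMem_empty _ hxx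
  have hc2 : s.c2 = {(s.mv, false)} := by
    apply Finset.eq_singleton_iff_unique_mem.2 ⟨hv.2.1, ?_⟩
    intro x hx
    by_contra hne
    have hxx : x ∈ s.c2.erase (s.mv, false) := Finset.mem_erase.2 ⟨hne, hx⟩
    rw [he2] at hxx
    exact Finset.notMem_empty _ hxx
  have hng : ∀ x : Lit ℕ, ({x} : Clause ℕ) ∉ alphaF := by
    intro x hx
    have := alpha_clause_card _ hx
    simp at this
  obtain ⟨j1, hj1i, hr1⟩ : ∃ j, ∃ _ : j < i, (L.get ⟨j, by omega⟩).res = s.c1 := by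
    rcases h1 with hm | hj
    · rw [hc1] at hm; exact absurd hm (hng _)
    · exact hj
  obtain ⟨j2, hj2i, hr2⟩ : ∃ j, ∃ _ : j < i, (L.get ⟨j, by omega⟩).res = s.c2 := by
    rcases h2 with hm | hj
    · rw [hc2] at hm; exact absurd hm (hng _)
    · exact hj
  have hne : j1 ≠ j2 := by
    intro hEq
    subst hEq
    have hcc : s.c1 = s.c2 := by rw [← hr1, ← hr2]
    rw [hc1, hc2] at hcc
    simp [Finset.singleton_inj] at hcc
  omega

end AlphaFacts

/-- `alphaF` has a read-once resolution refutation but no Var-ROR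
refutation; hence the 2CNF formulas with a Var-ROR refutation form a proper subset
of the 2CNF formulas with a read-once resolution refutation. -/
theorem stmt17 :
    CNF.hasROR alphaF ∧ ¬ CNF.hasVarROR alphaF ∧
    {Φ : CNF ℕ | CNF.is2CNF Φ ∧ CNF.hasVarROR Φ} ⊂
      {Φ : CNF ℕ | CNF.is2CNF Φ ∧ CNF.hasROR Φ} := by
  refine ⟨alpha_hasROR, alpha_not_varROR, ?_⟩
  rw [Set.ssubset_def]
  constructor
  · rintro Φ ⟨h2, hv⟩
    exact ⟨h2, varROR_imp_ROR hv⟩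
  · intro hsub
    exact alpha_not_varROR (hsub ⟨alpha_is2CNF, alpha_hasROR⟩).2
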